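/- If U ∈ ℝ^{m×r} has linearly independent columns u_1,…,u_r and τ_i ≠ 0 for all i, then there exists a unique nonsingular upper triangular matrix S ∈ ℝ^{r×r} such that the product (I − u_1u_1ᵀ/τ_1)(I − u_2u_2ᵀ/τ_2)⋯(I − u_ru_rᵀ/τ_r) equals I − U S⁻¹ Uᵀ, where S is obtained by taking the upper triangular part of UᵀU and halving its diagonal entries (when τ_i = ‖u_i‖²/2 for each i). -/

import Mathlib

open Matrix Finset

/-- Upper triangular part of `UᵀU` with halved diagonal. -/
noncomputable def cwyS {m r : ℕ} (U : Matrix (Fin m) (Fin r) ℝ) :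
    Matrix (Fin r) (Fin r) ℝ :=
  Matrix.of fun i j =>
    if i = j then (Uᵀ * U) i j / 2 else if i < j then (Uᵀ * U) i j else 0

private lemma vmv_mul_vmv {a b c : ℕ} (w : Fin a → ℝ) (u u' : Fin b → ℝ) (v : Fin c → ℝ) :
    vecMulVec w u * vecMulVec u' v = (u ⬝ᵥ u') • vecMulVec w v := by
  ext i j
  simp only [mul_apply, vecMulVec_apply, Matrix.smul_apply, dotProduct, smul_eq_mul, Finset.sum_mul]
  exact Finset.sum_congr rfl fun x _ => by ring

theorem cwy_transform (m r : ℕ) (U : Matrix (Fin m) (Fin r) ℝ)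
    (hU : LinearIndependent ℝ (fun j : Fin r => Uᵀ j))
    (τ : Fin r → ℝ) (hτ0 : ∀ i, τ i ≠ 0)
    (hτ : ∀ i, τ i = (∑ k, U k i ^ 2) / 2) :
    (∃! S : Matrix (Fin r) (Fin r) ℝ,
      S.BlockTriangular id ∧ IsUnit S ∧
      (List.ofFn fun i : Fin r =>
          (1 : Matrix (Fin m) (Fin m) ℝ)
            - (τ i)⁻¹ • vecMulVec (fun k => U k i) (fun k => U k i)).prod
        = 1 - U * S⁻¹ * Uᵀ) ∧
    (cwyS U).BlockTriangular id ∧ IsUnit (cwyS U) ∧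
    (List.ofFn fun i : Fin r =>
        (1 : Matrix (Fin m) (Fin m) ℝ)
          - (τ i)⁻¹ • vecMulVec (fun k => U k i) (fun k => U k i)).prod
      = 1 - U * (cwyS U)⁻¹ * Uᵀ := by
  set S := cwyS U with hSdef
  -- diagonal of S
  have hdiag : ∀ i, S i i = τ i := by
    intro i
    have : S i i = (∑ k, U k i * U k i) / 2 := by
      simp [hSdef, cwyS, mul_apply]
    rw [this, hτ i]
    congr 1
    exact Finset.sum_congr rfl fun k _ => (sq (U k i)).symm
  -- triangularity
  have htri : S.BlockTriangular id := by
    intro i j h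
    have h' : j < i := h
    simp only [hSdef, cwyS, Matrix.of_apply]
    rw [if_neg (by exact fun he => absurd he.symm (ne_of_lt h')),
      if_neg (by exact fun hlt => absurd (lt_trans h' hlt) (lt_irrefl _))]
  have hdet : S.det = ∏ i, τ i := by
    rw [Matrix.det_of_upperTriangular htri]
    exact Finset.prod_congr rfl fun i _ => hdiag i
  have hdetu : IsUnit S.det := by
    rw [hdet, isUnit_iff_ne_zero]
    exact Finset.prod_ne_zero_iff.2 fun i _ => hτ0 i
  have hunit : IsUnit S := (Matrix.isUnit_iff_isUnit_det S).2 hdetu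
  have hinv : S⁻¹ * S = 1 := Matrix.nonsing_inv_mul S hdetu
  set W := U * S⁻¹ with hWdef
  have hWS : W * S = U := by rw [hWdef, Matrix.mul_assoc, hinv, Matrix.mul_one]
  -- column recursion
  have hcol : ∀ (j : Fin r) (a : Fin m),
      W a j * τ j = U a j - ∑ i ∈ filter (fun i => i < j) univ,
        W a i * ((fun k => U k i) ⬝ᵥ (fun k => U k j)) := by
    intro j a
    have h0 : ∑ i, W a i * S i j = U a j := by
      rw [← Matrix.mul_apply, hWS]
    rw [← Finset.sum_filter_add_sum_filter_not univ (fun i => i < j)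
      (fun i => W a i * S i j)] at h0
    have h1 : ∑ i ∈ filter (fun i => ¬ i < j) univ, W a i * S i j = W a j * τ j := by
      rw [Finset.sum_eq_single_of_mem j (by simp)]
      · rw [hdiag]
      · intro i hi hij
        have : j < i := lt_of_le_of_ne (not_lt.1 (Finset.mem_filter.1 hi).2) (Ne.symm hij)
        rw [htri this, mul_zero]
    have h2 : ∑ i ∈ filter (fun i => i < j) univ, W a i * S i j
        = ∑ i ∈ filter (fun i => i < j) univ,
            W a i * ((fun k => U k i) ⬝ᵥ (fun k => U k j)) := by
      refine Finset.sum_congr rfl fun i hi => ?_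
      have hij : i < j := (Finset.mem_filter.1 hi).2
      have : S i j = (fun k => U k i) ⬝ᵥ (fun k => U k j) := by
        simp only [hSdef, cwyS, Matrix.of_apply, if_neg (ne_of_lt hij), if_pos hij,
          mul_apply, transpose_apply, dotProduct]
      rw [this]
    rw [h2] at h0
    linarith [h0]
  -- vecMulVec version
  have hvmv : ∀ j : Fin r,
      vecMulVec (fun a => W a j) (fun a => U a j)
        = (τ j)⁻¹ • vecMulVec (fun k => U k j) (fun k => U k j)
          - ∑ i ∈ filter (fun i => i < j) univ,
              ((τ j)⁻¹ * ((fun k => U k i) ⬝ᵥ (fun k => U k j))) •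
                vecMulVec (fun a => W a i) (fun a => U a j) := by
    intro j
    ext a b
    simp only [vecMulVec_apply, Matrix.sub_apply, Matrix.smul_apply, Matrix.sum_apply, smul_eq_mul]
    have h := hcol j a
    have hsum : ∑ i ∈ filter (fun i => i < j) univ,
        (τ j)⁻¹ * ((fun k => U k i) ⬝ᵥ (fun k => U k j)) * (W a i * U b j)
        = (τ j)⁻¹ * U b j * ∑ i ∈ filter (fun i => i < j) univ,
            W a i * ((fun k => U k i) ⬝ᵥ (fun k => U k j)) := by
      rw [Finset.mul_sum]
      exact Finset.sum_congr rfl fun i _ => by ring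
    rw [hsum]
    have hτj := hτ0 j
    field_simp
    linear_combination U b j * h
  -- partial product lemma
  set H : Fin r → Matrix (Fin m) (Fin m) ℝ := fun i =>
    (1 : Matrix (Fin m) (Fin m) ℝ)
      - (τ i)⁻¹ • vecMulVec (fun k => U k i) (fun k => U k i) with hHdef
  have key : ∀ k, k ≤ r → ((List.ofFn H).take k).prod
      = 1 - ∑ i ∈ filter (fun i : Fin r => (i : ℕ) < k) univ,
          vecMulVec (fun a => W a i) (fun a => U a i) := by
    intro k
    induction k with
    | zero => simp
    | succ k ih =>
      intro hk
      have hk' : k < r := hk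
      have hlen : k < (List.ofFn H).length := by simp [hk']
      rw [List.prod_take_succ _ k hlen, ih hk'.le]
      set j : Fin r := ⟨k, hk'⟩ with hjdef
      have hget : (List.ofFn H)[k] = H j := by
        simp [List.getElem_ofFn, hjdef]
      rw [hget, hHdef]
      set A := ∑ i ∈ filter (fun i : Fin r => (i : ℕ) < k) univ,
          vecMulVec (fun a => W a i) (fun a => U a i) with hAdef
      set B := vecMulVec (fun a => U a j) (fun a => U a j) with hBdef
      have hexp : (1 - A) * (1 - (τ j)⁻¹ • B)
          = 1 - A - (τ j)⁻¹ • B + (τ j)⁻¹ • (A * B) := by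
        simp only [mul_sub, sub_mul, one_mul, mul_one, mul_smul_comm, smul_sub]
        abel
      rw [hexp]
      have hfil : filter (fun i : Fin r => (i : ℕ) < k) univ
          = filter (fun i : Fin r => i < j) univ := by
        ext i; simp [Fin.lt_def, hjdef]
      have hAB : (τ j)⁻¹ • (A * B)
          = ∑ i ∈ filter (fun i => i < j) univ,
              ((τ j)⁻¹ * ((fun a => U a i) ⬝ᵥ (fun a => U a j))) •
                vecMulVec (fun a => W a i) (fun a => U a j) := by
        rw [hAdef, hBdef, Finset.sum_mul, hfil, Finset.smul_sum]
        exact Finset.sum_congr rfl fun i _ => by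
          rw [vmv_mul_vmv, smul_smul]
      have hfil2 : filter (fun i : Fin r => (i : ℕ) < k + 1) univ
          = insert j (filter (fun i : Fin r => (i : ℕ) < k) univ) := by
        ext i
        simp only [Finset.mem_filter, Finset.mem_insert, Finset.mem_univ, true_and, hjdef]
        constructor
        · intro h
          rcases Nat.lt_succ_iff_lt_or_eq.1 h with h | h
          · exact Or.inr h
          · exact Or.inl (Fin.ext h)
        · rintro (rfl | h)
          · exact Nat.lt_succ_self k
          · exact Nat.lt_succ_of_lt h
      rw [hfil2, Finset.sum_insert (by simp [hjdef])]
      rw [hAB, ← hfil]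
      have := hvmv j
      rw [hfil] at hAdef
      rw [← hfil] at this
      -- goal : 1 - A - (τ j)⁻¹ • B + ∑ ... = 1 - (vecMulVec w_j u_j + A)
      have hw : vecMulVec (fun a => W a j) (fun a => U a j)
          = (τ j)⁻¹ • B - ∑ i ∈ filter (fun i : Fin r => (i : ℕ) < k) univ,
              ((τ j)⁻¹ * ((fun a => U a i) ⬝ᵥ (fun a => U a j))) •
                vecMulVec (fun a => W a i) (fun a => U a j) := this
      rw [hw]
      abel
  -- final product
  have hfinal : (List.ofFn H).prod = 1 - U * S⁻¹ * Uᵀ := by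
    have h1 : (List.ofFn H).prod = ((List.ofFn H).take r).prod := by
      rw [List.take_of_length_le (by simp)]
    have h2 : filter (fun i : Fin r => (i : ℕ) < r) univ = univ :=
      Finset.filter_true_of_mem fun i _ => i.isLt
    have h3 : ∑ i : Fin r, vecMulVec (fun a => W a i) (fun a => U a i) = W * Uᵀ := by
      ext a b
      simp only [Matrix.sum_apply, vecMulVec_apply, mul_apply, transpose_apply]
    rw [h1, key r le_rfl, h2, h3, hWdef, Matrix.mul_assoc]
  -- injectivity from linear independence
  have hUinj : ∀ (n : Type) (X Y : Matrix (Fin r) n ℝ), U * X = U * Y → X = Y := by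
    intro n X Y hXY
    have hker : ∀ v : Fin r → ℝ, U.mulVec v = 0 → v = 0 := by
      intro v hv
      have hv' : ∑ i, v i • (fun k => U k i) = (0 : Fin m → ℝ) := by
        funext a
        have := congrFun hv a
        simpa [Matrix.mulVec, dotProduct, Finset.sum_apply, mul_comm] using this
      have := Fintype.linearIndependent_iff.1 hU v (by
        exact hv')
      funext i; exact this i
    ext i c
    have hcolv : U.mulVec (fun j => X j c - Y j c) = 0 := by
      funext a
      have := congrFun (congrFun hXY a) c
      simp only [mul_apply] at this
      simp [Matrix.mulVec, dotProduct, mul_sub, Finset.sum_sub_distrib, this]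
    have := congrFun (hker _ hcolv) i
    simpa [sub_eq_zero] using this
  refine ⟨⟨S, ⟨htri, hunit, hfinal⟩, ?_⟩, htri, hunit, hfinal⟩
  rintro T ⟨htriT, hunitT, hprodT⟩
  have heq : U * (T⁻¹ * Uᵀ) = U * (S⁻¹ * Uᵀ) := by
    have h := hprodT.symm.trans hfinal
    have h' : U * T⁻¹ * Uᵀ = U * S⁻¹ * Uᵀ := sub_right_injective h
    rw [← Matrix.mul_assoc, ← Matrix.mul_assoc]
    exact h'
  have h1 : T⁻¹ * Uᵀ = S⁻¹ * Uᵀ := hUinj _ _ _ heq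
  have h2 : U * (T⁻¹)ᵀ = U * (S⁻¹)ᵀ := by
    have := congrArg Matrix.transpose h1
    simpa [Matrix.transpose_mul] using this
  have h3 : T⁻¹ = S⁻¹ := by
    have := hUinj _ _ _ h2
    exact Matrix.transpose_inj.1 this
  have hdetT : IsUnit T.det := (Matrix.isUnit_iff_isUnit_det T).1 hunitT
  calc T = (T⁻¹)⁻¹ := (Matrix.nonsing_inv_nonsing_inv T hdetT).symm
    _ = (S⁻¹)⁻¹ := by rw [h3]
    _ = S := Matrix.nonsing_inv_nonsing_inv S hdetu
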